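/- Let u₁,…,u_m be variables with deg(u_i) = i, and let r ≥ 1. Then any monomial U = ∏ u_i^{c_i} with deg(U) ≥ (r + m − 1)·lcm(2,…,m) can be written as U = U₁·U₂ where U₁ is a monomial in the u_i with deg(U₁) = r·lcm(2,…,m). -/

import Mathlib

private lemma deg_sub' {m : ℕ} (c d : Fin m → ℕ) (hle : ∀ i, d i ≤ c i) :
    ∑ i : Fin m, ((i : ℕ) + 1) * (c i - d i)
      = (∑ i : Fin m, ((i : ℕ) + 1) * c i) - ∑ i : Fin m, ((i : ℕ) + 1) * d i := by
  have key : ∑ i : Fin m, ((i : ℕ) + 1) * (c i - d i) + ∑ i : Fin m, ((i : ℕ) + 1) * d i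
      = ∑ i : Fin m, ((i : ℕ) + 1) * c i := by
    rw [← Finset.sum_add_distrib]
    exact Finset.sum_congr rfl fun i _ => by
      rw [← Nat.mul_add, Nat.sub_add_cancel (hle i)]
  omega

private lemma extract' (m L : ℕ) (hm : 1 ≤ m) (hLpos : 0 < L)
    (hdvd : ∀ i : Fin m, ((i : ℕ) + 1) ∣ L)
    (c : Fin m → ℕ) (h : m * L ≤ ∑ i : Fin m, ((i : ℕ) + 1) * c i) :
    ∃ d : Fin m → ℕ, (∀ i, d i ≤ c i) ∧ ∑ i : Fin m, ((i : ℕ) + 1) * d i = L := by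
  have hex : ∃ i : Fin m, L / ((i : ℕ) + 1) ≤ c i := by
    by_contra hc
    push_neg at hc
    have hb : ∀ i : Fin m, ((i : ℕ) + 1) * c i ≤ L - 1 := by
      intro i
      have h1 : c i + 1 ≤ L / ((i : ℕ) + 1) := hc i
      have h2 : ((i : ℕ) + 1) * (c i + 1) ≤ ((i : ℕ) + 1) * (L / ((i : ℕ) + 1)) :=
        Nat.mul_le_mul_left _ h1
      rw [Nat.mul_div_cancel' (hdvd i), Nat.mul_add, Nat.mul_one] at h2
      omega
    have hsum : ∑ i : Fin m, ((i : ℕ) + 1) * c i ≤ m * (L - 1) := by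
      calc ∑ i : Fin m, ((i : ℕ) + 1) * c i ≤ ∑ _i : Fin m, (L - 1) :=
            Finset.sum_le_sum fun i _ => hb i
        _ = m * (L - 1) := by simp [Finset.sum_const, mul_comm]
    obtain ⟨K, rfl⟩ : ∃ K, L = K + 1 := ⟨L - 1, by omega⟩
    have e1 : m * (K + 1) = m * K + m := by ring
    have e2 : m * (K + 1 - 1) = m * K := by simp
    omega
  obtain ⟨i, hi⟩ := hex
  refine ⟨fun j => if j = i then L / ((i : ℕ) + 1) else 0, ?_, ?_⟩
  · intro j
    by_cases hj : j = i
    · subst hj; simpa using hi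
    · simp [hj]
  · have : ∀ j : Fin m, ((j : ℕ) + 1) * (if j = i then L / ((i : ℕ) + 1) else 0)
        = if j = i then ((j : ℕ) + 1) * (L / ((i : ℕ) + 1)) else 0 := by
      intro j; by_cases hj : j = i <;> simp [hj]
    rw [Finset.sum_congr rfl fun j _ => this j, Finset.sum_ite_eq' Finset.univ i]
    simp [Nat.mul_div_cancel' (hdvd i)]

private lemma main' (m L : ℕ) (hm : 1 ≤ m) (hLpos : 0 < L)
    (hdvd : ∀ i : Fin m, ((i : ℕ) + 1) ∣ L) :
    ∀ r, 1 ≤ r → ∀ c : Fin m → ℕ,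
      (r + m - 1) * L ≤ ∑ i : Fin m, ((i : ℕ) + 1) * c i →
      ∃ d : Fin m → ℕ, (∀ i, d i ≤ c i) ∧ ∑ i : Fin m, ((i : ℕ) + 1) * d i = r * L := by
  intro r hr
  induction r, hr using Nat.le_induction with
  | base =>
    intro c h
    have hmm : (1 + m - 1) = m := by omega
    rw [hmm] at h
    obtain ⟨d, hd1, hd2⟩ := extract' m L hm hLpos hdvd c h
    exact ⟨d, hd1, by rw [one_mul]; exact hd2⟩
  | succ r hr ih =>
    intro c h
    have hm' : m * L ≤ ∑ i : Fin m, ((i : ℕ) + 1) * c i :=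
      le_trans (Nat.mul_le_mul_right L (by omega)) h
    obtain ⟨d₀, hd₀, hdeg₀⟩ := extract' m L hm hLpos hdvd c hm'
    have h' : (r + m - 1) * L ≤ ∑ i : Fin m, ((i : ℕ) + 1) * (c i - d₀ i) := by
      rw [deg_sub' c d₀ hd₀]
      have e1 : (r + 1 + m - 1) * L = (r + m - 1) * L + L := by
        have : r + 1 + m - 1 = (r + m - 1) + 1 := by omega
        rw [this]; ring
      omega
    obtain ⟨d₁, hd₁, hdeg₁⟩ := ih (fun i => c i - d₀ i) h'
    refine ⟨fun i => d₀ i + d₁ i, fun i => show d₀ i + d₁ i ≤ c i from by have := hd₀ i; have := hd₁ i; omega, ?_⟩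
    have e : ∑ i : Fin m, ((i : ℕ) + 1) * (d₀ i + d₁ i)
        = (∑ i : Fin m, ((i : ℕ) + 1) * d₀ i) + ∑ i : Fin m, ((i : ℕ) + 1) * d₁ i := by
      rw [← Finset.sum_add_distrib]
      exact Finset.sum_congr rfl fun i _ => by ring
    rw [e, hdeg₀, hdeg₁]; ring

/-- Monomial factorization: with variables `u₁,…,u_m` of degrees `deg u_i = i`
(encoded by exponent vectors `c : Fin m → ℕ`, `deg c = ∑ i·c_i`), any monomial of
degree at least `(r + m − 1)·lcm(2,…,m)` factors as `U₁·U₂` (i.e. `c = d + e`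
componentwise) with `deg U₁ = r·lcm(2,…,m)`. -/
theorem stmt_2 (m r : ℕ) (hm : 1 ≤ m) (hr : 1 ≤ r)
    (L : ℕ) (hL : L = (Finset.Icc 2 m).lcm id)
    (c : Fin m → ℕ)
    (h : (r + m - 1) * L ≤ ∑ i : Fin m, ((i : ℕ) + 1) * c i) :
    ∃ d e : Fin m → ℕ, (∀ i, d i + e i = c i) ∧
      ∑ i : Fin m, ((i : ℕ) + 1) * d i = r * L := by
  have hdvd : ∀ i : Fin m, ((i : ℕ) + 1) ∣ L := by
    intro i
    rcases Nat.eq_zero_or_pos (i : ℕ) with h0 | h0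
    · simp [h0]
    · have hmem : ((i : ℕ) + 1) ∈ Finset.Icc 2 m := by
        refine Finset.mem_Icc.mpr ⟨by omega, ?_⟩
        have := i.isLt; omega
      rw [hL]
      exact Finset.dvd_lcm hmem
  have hLpos : 0 < L := by
    rw [hL]
    rcases Nat.eq_zero_or_pos ((Finset.Icc 2 m).lcm id) with h0 | h0
    · exfalso
      rw [Finset.lcm_eq_zero_iff] at h0
      obtain ⟨x, hx, hx0⟩ := h0
      simp only [Finset.mem_Icc] at hx
      simp only [id] at hx0
      omega
    · exact h0
  obtain ⟨d, hd1, hd2⟩ := main' m L hm hLpos hdvd r hr c h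
  exact ⟨d, fun i => c i - d i, fun i => show d i + (c i - d i) = c i from by have := hd1 i; omega, hd2⟩
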